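/- arXiv:1902.09185 — 2 statements merged into one kernel-verified Lean document; each statement's English description precedes it below -/
import Mathlib

section
/- Let A be an artin algebra with id A = m+1 and a minimal injective coresolution 0 → A → I⁰ → ⋯ → I^{m+1} → 0. Then every indecomposable direct summand I' of I^{m+1} has projective dimension at least m+1. -/
open CategoryTheory TensorProduct

universe u

/-- The `k`-th Ext group of the `A`-modules `X` and `Y`. -/
noncomputable def ExtGrp (A : Type u) [Ring A] (k : ℕ)
    (X Y : Type u) [AddCommGroup X] [Module A X] [AddCommGroup Y] [Module A Y] : Type u :=
  ((Ext ℤ (ModuleCat.{u} A) k).obj (Opposite.op (ModuleCat.of A X))).obj (ModuleCat.of A Y)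

noncomputable instance (A : Type u) [Ring A] (k : ℕ)
    (X Y : Type u) [AddCommGroup X] [Module A X] [AddCommGroup Y] [Module A Y] :
    AddCommGroup (ExtGrp A k X Y) := by
  unfold ExtGrp; infer_instance

/-- `Ext_A^k(X, Y) = 0`. -/
def ExtZero (A : Type u) [Ring A] (k : ℕ)
    (X Y : Type u) [AddCommGroup X] [Module A X] [AddCommGroup Y] [Module A Y] : Prop :=
  Subsingleton (ExtGrp A k X Y)

/-- `pd X ≤ n`: `Ext^k(X, -)` vanishes for all `k > n`. -/
def ProjDimLE (A : Type u) [Ring A] (X : Type u) [AddCommGroup X] [Module A X] (n : ℕ) : Prop :=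
  ∀ k : ℕ, n < k → ∀ Y : ModuleCat.{u} A, ExtZero A k X Y

/-- The projective dimension of `X`, the length of a shortest projective resolution,
as an element of `ℕ∞` (`⊤` if infinite). -/
noncomputable def projDim (A : Type u) [Ring A] (X : Type u) [AddCommGroup X] [Module A X] : ℕ∞ :=
  sInf ((fun n : ℕ => (n : ℕ∞)) '' {n : ℕ | ProjDimLE A X n})

/-- `id Y ≤ n`: `Ext^k(-, Y)` vanishes for all `k > n`. -/
def InjDimLE (A : Type u) [Ring A] (Y : Type u) [AddCommGroup Y] [Module A Y] (n : ℕ) : Prop :=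
  ∀ k : ℕ, n < k → ∀ X : ModuleCat.{u} A, ExtZero A k X Y

/-- The injective dimension of `Y`, as an element of `ℕ∞` (`⊤` if infinite). -/
noncomputable def injDim (A : Type u) [Ring A] (Y : Type u) [AddCommGroup Y] [Module A Y] : ℕ∞ :=
  sInf ((fun n : ℕ => (n : ℕ∞)) '' {n : ℕ | InjDimLE A Y n})

/-- `X ∈ add Q`: `X` is a direct summand of a finite direct sum of copies of `Q`. -/
def InAdd (A : Type u) [Ring A] (Q : Type u) [AddCommGroup Q] [Module A Q]
    (X : Type u) [AddCommGroup X] [Module A X] : Prop :=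
  ∃ (n : ℕ) (Y : ModuleCat.{u} A), Nonempty ((X × Y) ≃ₗ[A] (Fin n → Q))

/-- `f : M → I` is an injective hull: `I` is an injective module and `f` is an essential
monomorphism. -/
def IsInjHull (A : Type u) [Ring A] {M I : Type u} [AddCommGroup M] [Module A M]
    [AddCommGroup I] [Module A I] (f : M →ₗ[A] I) : Prop :=
  Module.Injective A I ∧ Function.Injective f ∧
    ∀ N : Submodule A I, N ≠ ⊥ → N ⊓ LinearMap.range f ≠ ⊥

/-- An `A`-module is indecomposable: nonzero, and any direct sum decomposition has a
trivial factor. -/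
def Indecomp (A : Type u) [Ring A] (X : Type u) [AddCommGroup X] [Module A X] : Prop :=
  ¬ Subsingleton X ∧
    ∀ Y Z : ModuleCat.{u} A, Nonempty (X ≃ₗ[A] (Y × Z)) → Subsingleton Y ∨ Subsingleton Z

section Aux

lemma factor_surj {R : Type u} [Ring R] {M N P : Type u} [AddCommGroup M] [Module R M]
    [AddCommGroup N] [Module R N] [AddCommGroup P] [Module R P]
    (f : M →ₗ[R] N) (hf : Function.Surjective f) (g : M →ₗ[R] P)
    (h : ∀ x, f x = 0 → g x = 0) : ∃ h' : N →ₗ[R] P, ∀ x, h' (f x) = g x := by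
  refine ⟨((LinearMap.ker f).liftQ g (fun x hx => h x hx)).comp
    (LinearMap.quotKerEquivOfSurjective f hf).symm.toLinearMap, fun x => ?_⟩
  have : (LinearMap.quotKerEquivOfSurjective f hf).symm (f x) = Submodule.Quotient.mk x := by
    rw [LinearEquiv.symm_apply_eq]
    simp [LinearMap.quotKerEquivOfSurjective, LinearMap.quotKerEquivRange_apply_mk]
  simp [this]
  rfl

lemma corestrict {A : Type u} [Ring A] {K1 I1 X : Type u} [AddCommGroup K1] [Module A K1]
    [AddCommGroup I1] [Module A I1] [AddCommGroup X] [Module A X]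
    (f : K1 →ₗ[A] I1) (hf : Function.Injective f) (p : X →ₗ[A] I1)
    (hp : ∀ x, p x ∈ LinearMap.range f) : ∃ w : X →ₗ[A] K1, ∀ x, f (w x) = p x := by
  have key : ∀ z : LinearMap.range f, f ((LinearEquiv.ofInjective f hf).symm z) = z := fun z =>
    congrArg Subtype.val ((LinearEquiv.ofInjective f hf).apply_symm_apply z)
  exact ⟨(LinearEquiv.ofInjective f hf).symm.toLinearMap.comp
    (LinearMap.codRestrict (LinearMap.range f) p hp), fun x => key _⟩

lemma van_of_ext {A : Type u} [Ring A] {M : ModuleCat.{u} A} (P : ProjectiveResolution M)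
    (k : ℕ) (Y : ModuleCat.{u} A) (h : Subsingleton (ExtGrp A (k+1) ↥M ↥Y)) :
    ∀ u : P.complex.X (k+1) ⟶ Y, P.complex.d (k+2) (k+1) ≫ u = 0 →
      ∃ s : P.complex.X k ⟶ Y, P.complex.d (k+1) k ≫ s = u := by
  have hz : Limits.IsZero (((Ext ℤ (ModuleCat.{u} A) (k+1)).obj (Opposite.op M)).obj Y) := by
    have : Subsingleton ↥(((Ext ℤ (ModuleCat.{u} A) (k+1)).obj (Opposite.op M)).obj Y) := h
    exact ModuleCat.isZero_of_subsingleton _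
  have hz2 : Limits.IsZero ((P.complex.linearYonedaObj ℤ Y).homology (k+1)) :=
    Limits.IsZero.of_iso hz (P.isoExt (k+1) Y).symm
  have hex : (P.complex.linearYonedaObj ℤ Y).ExactAt (k+1) :=
    (HomologicalComplex.exactAt_iff_isZero_homology _ _).2 hz2
  rw [HomologicalComplex.exactAt_iff' _ k (k+1) (k+2) (by simp) (by simp)] at hex
  rw [ShortComplex.moduleCat_exact_iff] at hex
  intro u hu
  obtain ⟨s, hs⟩ := hex u (by
    show (P.complex.linearYonedaObj ℤ Y).d (k+1) (k+2) u = 0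
    exact hu)
  refine ⟨s, ?_⟩
  have h2 : (P.complex.linearYonedaObj ℤ Y).d k (k+1) s = u := hs
  exact h2

lemma van_of_injective {A : Type u} [Ring A] {M : ModuleCat.{u} A} (P : ProjectiveResolution M)
    (k : ℕ) (Y : ModuleCat.{u} A) (hY : Module.Injective A ↥Y) :
    ∀ u : P.complex.X (k+1) ⟶ Y, P.complex.d (k+2) (k+1) ≫ u = 0 →
      ∃ s : P.complex.X k ⟶ Y, P.complex.d (k+1) k ≫ s = u := by
  intro u hu
  have hker : ∀ x : P.complex.X (k+1), P.complex.d (k+1) k x = 0 → u x = 0 := by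
    intro x hx
    have hE := P.exact_succ k
    rw [ShortComplex.moduleCat_exact_iff] at hE
    obtain ⟨y, hy⟩ := hE x hx
    have : u (P.complex.d (k+2) (k+1) y) = (P.complex.d (k+2) (k+1) ≫ u) y := rfl
    rw [← hy, this, hu]
    rfl
  obtain ⟨w, hw⟩ := factor_surj (P.complex.d (k+1) k).hom.rangeRestrict
    (LinearMap.surjective_rangeRestrict _) u.hom
    (fun x hx => hker x (by simpa [Subtype.ext_iff] using hx))
  obtain ⟨t, ht⟩ := hY.out (LinearMap.range (P.complex.d (k+1) k).hom).subtype
    (Submodule.injective_subtype _) w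
  refine ⟨ModuleCat.ofHom t, ?_⟩
  ext x
  have h1 : P.complex.d (k+1) k x =
      (LinearMap.range (P.complex.d (k+1) k).hom).subtype ((P.complex.d (k+1) k).hom.rangeRestrict x) := rfl
  show t (P.complex.d (k+1) k x) = u.hom x
  rw [h1, ht, hw]

lemma van_transfer {A : Type u} [Ring A] {M : ModuleCat.{u} A} (P : ProjectiveResolution M)
    {K1 I1 K2 : ModuleCat.{u} A} (f : ↥K1 →ₗ[A] ↥I1) (g : ↥I1 →ₗ[A] ↥K2)
    (hf : Function.Injective f) (hg : Function.Surjective g) (hex : Function.Exact f g) (k : ℕ)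
    (h1 : ∀ u : P.complex.X (k+2) ⟶ K1, P.complex.d (k+3) (k+2) ≫ u = 0 →
      ∃ s : P.complex.X (k+1) ⟶ K1, P.complex.d (k+2) (k+1) ≫ s = u)
    (h2 : ∀ u : P.complex.X (k+1) ⟶ I1, P.complex.d (k+2) (k+1) ≫ u = 0 →
      ∃ s : P.complex.X k ⟶ I1, P.complex.d (k+1) k ≫ s = u) :
    ∀ u : P.complex.X (k+1) ⟶ K2, P.complex.d (k+2) (k+1) ≫ u = 0 →
      ∃ s : P.complex.X k ⟶ K2, P.complex.d (k+1) k ≫ s = u := by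
  intro u hu
  let gm : I1 ⟶ K2 := ModuleCat.ofHom g
  haveI : Epi gm := (ModuleCat.epi_iff_surjective gm).2 hg
  let v : P.complex.X (k+1) ⟶ I1 := Projective.factorThru u gm
  have hv : v ≫ gm = u := Projective.factorThru_comp u gm
  have hp : ∀ x, (P.complex.d (k+2) (k+1) ≫ v) x ∈ LinearMap.range f := by
    intro x
    have hzero : g ((P.complex.d (k+2) (k+1) ≫ v) x) = 0 := by
      have h' : g ((P.complex.d (k+2) (k+1) ≫ v) x) = (P.complex.d (k+2) (k+1) ≫ u) x := by
        rw [← hv]; rfl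
      rw [h', hu]; rfl
    exact (hex _).1 hzero
  obtain ⟨w, hwf⟩ := corestrict f hf (P.complex.d (k+2) (k+1) ≫ v).hom hp
  have hwcoc : P.complex.d (k+3) (k+2) ≫ (ModuleCat.ofHom w) = 0 := by
    ext y
    apply hf
    show f (w (P.complex.d (k+3) (k+2) y)) = f 0
    rw [map_zero]
    have h0 : (P.complex.d (k+2) (k+1)) ((P.complex.d (k+3) (k+2)) y) = 0 := by
      have h1' : (P.complex.d (k+3) (k+2) ≫ P.complex.d (k+2) (k+1)) y
          = (0 : P.complex.X (k+3) ⟶ P.complex.X (k+1)) y := by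
        rw [P.complex.d_comp_d]
      exact h1'
    have := hwf ((P.complex.d (k+3) (k+2)) y)
    rw [this]
    show v ((P.complex.d (k+2) (k+1)) ((P.complex.d (k+3) (k+2)) y)) = 0
    rw [h0, map_zero]
  obtain ⟨s, hs⟩ := h1 (ModuleCat.ofHom w) hwcoc
  let fm : K1 ⟶ I1 := ModuleCat.ofHom f
  let v' : P.complex.X (k+1) ⟶ I1 := v - s ≫ fm
  have hv'd : P.complex.d (k+2) (k+1) ≫ v' = 0 := by
    ext x
    have e1 : v' (P.complex.d (k+2) (k+1) x)
        = v (P.complex.d (k+2) (k+1) x) - f (s (P.complex.d (k+2) (k+1) x)) := rfl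
    show v' (P.complex.d (k+2) (k+1) x) = 0
    rw [e1]
    have e2 : s (P.complex.d (k+2) (k+1) x) = w x := congrArg (fun φ => φ.hom x) hs
    rw [e2, hwf x]
    exact sub_eq_zero_of_eq rfl
  obtain ⟨t, ht⟩ := h2 v' hv'd
  refine ⟨t ≫ gm, ?_⟩
  ext x
  show g (t (P.complex.d (k+1) k x)) = u x
  have e3 : t (P.complex.d (k+1) k x) = v' x := congrArg (fun φ => φ.hom x) ht
  rw [e3]
  show g (v x - f (s x)) = u x
  rw [map_sub]
  have hgf : g (f (s x)) = 0 := (hex _).2 ⟨s x, rfl⟩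
  rw [hgf, sub_zero]
  exact congrArg (fun φ => φ.hom x) hv

lemma lift_through {A : Type u} [Ring A] {M : ModuleCat.{u} A} (P : ProjectiveResolution M)
    {K1 I1 K2 : ModuleCat.{u} A} (f : ↥K1 →ₗ[A] ↥I1) (g : ↥I1 →ₗ[A] ↥K2)
    (hf : Function.Injective f) (hg : Function.Surjective g) (hex : Function.Exact f g)
    (h1 : ∀ u : P.complex.X 1 ⟶ K1, P.complex.d 2 1 ≫ u = 0 →
      ∃ s : P.complex.X 0 ⟶ K1, P.complex.d 1 0 ≫ s = u)
    (φ : ↥M →ₗ[A] ↥K2) : ∃ h : ↥M →ₗ[A] ↥I1, ∀ x, g (h x) = φ x := by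
  let π0 : P.complex.X 0 ⟶ M := P.π.f 0
  have hπ : Function.Surjective π0 := by
    have : Epi (P.π.f 0) := inferInstance
    exact (ModuleCat.epi_iff_surjective (P.π.f 0)).1 this
  have hπd : ∀ x, π0 (P.complex.d 1 0 x) = 0 := by
    intro x
    have h' : (P.complex.d 1 0 ≫ P.π.f 0) x = (0 : P.complex.X 1 ⟶ _) x := by
      rw [P.complex_d_comp_π_f_zero]
    exact h'
  let φm : M ⟶ K2 := ModuleCat.ofHom φ
  let u₀ : P.complex.X 0 ⟶ K2 := π0 ≫ φm
  let gm : I1 ⟶ K2 := ModuleCat.ofHom g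
  haveI : Epi gm := (ModuleCat.epi_iff_surjective gm).2 hg
  let v₀ : P.complex.X 0 ⟶ I1 := Projective.factorThru u₀ gm
  have hv₀ : v₀ ≫ gm = u₀ := Projective.factorThru_comp u₀ gm
  have hp : ∀ x, (P.complex.d 1 0 ≫ v₀) x ∈ LinearMap.range f := by
    intro x
    refine (hex _).1 ?_
    have h' : g ((P.complex.d 1 0 ≫ v₀) x) = u₀ (P.complex.d 1 0 x) := by
      rw [← hv₀]; rfl
    rw [h']
    show φ (π0 (P.complex.d 1 0 x)) = 0
    rw [hπd, map_zero]
  obtain ⟨w, hwf⟩ := corestrict f hf (P.complex.d 1 0 ≫ v₀).hom hp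
  have hwcoc : P.complex.d 2 1 ≫ (ModuleCat.ofHom w) = 0 := by
    ext y
    apply hf
    show f (w (P.complex.d 2 1 y)) = f 0
    rw [map_zero, hwf]
    show v₀ (P.complex.d 1 0 (P.complex.d 2 1 y)) = 0
    have h0 : P.complex.d 1 0 (P.complex.d 2 1 y) = 0 := by
      have h1' : (P.complex.d 2 1 ≫ P.complex.d 1 0) y
          = (0 : P.complex.X 2 ⟶ P.complex.X 0) y := by rw [P.complex.d_comp_d]
      exact h1'
    rw [h0, map_zero]
  obtain ⟨s, hs⟩ := h1 (ModuleCat.ofHom w) hwcoc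
  let fm : K1 ⟶ I1 := ModuleCat.ofHom f
  let v : P.complex.X 0 ⟶ I1 := v₀ - s ≫ fm
  have hvd : ∀ y, v (P.complex.d 1 0 y) = 0 := by
    intro y
    have e1 : v (P.complex.d 1 0 y)
        = v₀ (P.complex.d 1 0 y) - f (s (P.complex.d 1 0 y)) := rfl
    rw [e1]
    have e2 : s (P.complex.d 1 0 y) = w y := congrArg (fun φ => φ.hom y) hs
    rw [e2, hwf y]
    exact sub_eq_zero_of_eq rfl
  have hker : ∀ x, π0 x = 0 → v x = 0 := by
    intro x hx
    have hE := P.exact₀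
    rw [ShortComplex.moduleCat_exact_iff] at hE
    obtain ⟨y, hy⟩ := hE x hx
    rw [← hy]
    exact hvd y
  obtain ⟨h, hh⟩ := factor_surj π0.hom hπ v.hom hker
  refine ⟨h, fun x => ?_⟩
  obtain ⟨y, rfl⟩ := hπ x
  rw [hh]
  show g (v₀ y - f (s y)) = φ (π0 y)
  rw [map_sub]
  have hgf : g (f (s y)) = 0 := (hex _).2 ⟨s y, rfl⟩
  rw [hgf, sub_zero]
  exact congrArg (fun φ => φ.hom y) hv₀

end Aux


lemma main_aux {A : Type u} [Ring A] (m : ℕ)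
    (K : Fin (m + 3) → ModuleCat.{u} A) (Is : Fin (m + 2) → ModuleCat.{u} A)
    (f : ∀ i : Fin (m + 2), ↥(K i.castSucc) →ₗ[A] ↥(Is i))
    (g : ∀ i : Fin (m + 2), ↥(Is i) →ₗ[A] ↥(K i.succ))
    (hKlast : Subsingleton (K (Fin.last (m + 2))))
    (hhull : ∀ i, IsInjHull A (f i))
    (hepi : ∀ i, Function.Surjective (g i))
    (hexact : ∀ i, Function.Exact (f i) (g i))
    (I' : ModuleCat.{u} A) (hne : ¬ Subsingleton ↥I')
    (Csum : ModuleCat.{u} A) (e : (↥I' × ↥Csum) ≃ₗ[A] ↥(Is (Fin.last (m + 1))))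
    (hvan : ∀ k, m < k → ∀ Y : ModuleCat.{u} A, Subsingleton (ExtGrp A k ↥I' ↥Y)) :
    False := by
  obtain ⟨P⟩ := (inferInstance : CategoryTheory.HasProjectiveResolution I').out
  -- the descending chain of vanishing
  have hchain : ∀ j : ℕ, (_hj : j ≤ m) →
      ∀ u : P.complex.X (m - j + 1) ⟶ K ⟨j, by omega⟩,
        P.complex.d (m - j + 2) (m - j + 1) ≫ u = 0 →
        ∃ s : P.complex.X (m - j) ⟶ K ⟨j, by omega⟩,
          P.complex.d (m - j + 1) (m - j) ≫ s = u := by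
    intro j
    induction j with
    | zero =>
      intro _
      exact van_of_ext P m (K ⟨0, by omega⟩) (hvan (m + 1) (by omega) _)
    | succ j ih =>
      intro hj
      have IH := ih (by omega)
      have harith : m - j = m - (j + 1) + 1 := by omega
      rw [harith] at IH
      exact van_transfer P (f ⟨j, by omega⟩) (g ⟨j, by omega⟩)
        (hhull ⟨j, by omega⟩).2.1 (hepi ⟨j, by omega⟩) (hexact ⟨j, by omega⟩)
        (m - (j + 1)) IH
        (van_of_injective P (m - (j + 1)) (Is ⟨j, by omega⟩) (hhull ⟨j, by omega⟩).1)
  have hKm := hchain m le_rfl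
  rw [Nat.sub_self] at hKm
  -- the last hull map is an isomorphism
  set last : Fin (m + 2) := Fin.last (m + 1) with hlastdef
  have hfsurj : Function.Surjective (f last) := by
    intro y
    refine (hexact last y).1 ?_
    haveI : Subsingleton ↥(K last.succ) := hKlast
    exact Subsingleton.elim _ _
  let elast : ↥(K last.castSucc) ≃ₗ[A] ↥(Is last) :=
    LinearEquiv.ofBijective (f last) ⟨(hhull last).2.1, hfsurj⟩
  -- φ : I' → K^{m+1}
  let incl : ↥I' →ₗ[A] ↥(Is last) := e.toLinearMap.comp (LinearMap.inl A ↥I' ↥Csum)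
  have hincl : Function.Injective incl := by
    intro a b hab
    have : ((a, 0) : ↥I' × ↥Csum) = (b, 0) := e.injective hab
    exact (Prod.ext_iff.1 this).1
  let i₀ : Fin (m + 2) := ⟨m, by omega⟩
  let φ : ↥I' →ₗ[A] ↥(K i₀.succ) := elast.symm.toLinearMap.comp incl
  have hφ : Function.Injective φ := fun a b hab => hincl (elast.symm.injective hab)
  -- lift φ through g i₀
  obtain ⟨h, hh⟩ := lift_through P (f i₀) (g i₀) (hhull i₀).2.1 (hepi i₀) (hexact i₀) hKm φ
  have hinj : Function.Injective h := by
    intro a b hab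
    apply hφ
    rw [← hh, ← hh, hab]
  -- essentiality contradiction
  have hne' : LinearMap.range h ≠ ⊥ := by
    rw [not_subsingleton_iff_nontrivial] at hne
    obtain ⟨x, hx⟩ := exists_ne (0 : ↥I')
    rw [Submodule.ne_bot_iff]
    exact ⟨h x, ⟨x, rfl⟩, fun h0 => hx (hinj (by rw [h0, map_zero]))⟩
  have hmeet := (hhull i₀).2.2 (LinearMap.range h) hne'
  apply hmeet
  rw [Submodule.eq_bot_iff]
  rintro y ⟨⟨x, rfl⟩, ⟨z, hz⟩⟩
  have h0 : φ x = 0 := by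
    rw [← hh, ← hz]
    exact (hexact i₀ _).2 ⟨z, rfl⟩
  rw [hφ (by rw [h0, map_zero] : φ x = φ 0), map_zero]


/-- Let `A` be an artin algebra with `id A = m + 1` and minimal injective
coresolution `0 → A → I⁰ → ⋯ → I^{m+1} → 0` (encoded by short exact sequences
`0 → K_i → I^i → K_{i+1} → 0` with each `K_i → I^i` an injective hull, `K 0 ≅ A` and
`K_{m+2} = 0`). Then every indecomposable direct summand `I'` of `I^{m+1}` satisfies
`pd I' ≥ m + 1`. -/

theorem stmt11 (R₀ : Type u) [CommRing R₀] [IsArtinianRing R₀]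
    (A : Type u) [Ring A] [Algebra R₀ A] [Module.Finite R₀ A]
    (m : ℕ) (hid : injDim A A = ((m : ℕ∞) + 1))
    (K : Fin (m + 3) → ModuleCat.{u} A) (Is : Fin (m + 2) → ModuleCat.{u} A)
    (f : ∀ i : Fin (m + 2), ↥(K i.castSucc) →ₗ[A] ↥(Is i))
    (g : ∀ i : Fin (m + 2), ↥(Is i) →ₗ[A] ↥(K i.succ))
    (hK0 : Nonempty (A ≃ₗ[A] K 0)) (hKlast : Subsingleton (K (Fin.last (m + 2))))
    (hhull : ∀ i, IsInjHull A (f i))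
    (hepi : ∀ i, Function.Surjective (g i))
    (hexact : ∀ i, Function.Exact (f i) (g i)) :
    ∀ I' : ModuleCat.{u} A, Indecomp A I' →
      (∃ C : ModuleCat.{u} A, Nonempty ((↥I' × ↥C) ≃ₗ[A] ↥(Is (Fin.last (m + 1))))) →
      ((m : ℕ∞) + 1) ≤ projDim A I' := by
  intro I' hInd hsum
  obtain ⟨Csum, ⟨e⟩⟩ := hsum
  refine le_sInf ?_
  rintro b ⟨n, hn, rfl⟩
  by_contra hb
  push_neg at hb
  have hnm : n ≤ m := by
    have h1 : (n : ℕ∞) < ((m + 1 : ℕ) : ℕ∞) := by push_cast; exact hb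
    have := (Nat.cast_lt (α := ℕ∞)).1 h1
    omega
  have hvan : ∀ k, m < k → ∀ Y : ModuleCat.{u} A, Subsingleton (ExtGrp A k ↥I' ↥Y) :=
    fun k hk Y => hn k (by omega) Y
  exact (main_aux m K Is f g hKlast hhull hepi hexact I' hInd.1 Csum e hvan).elim
end

section
/- Let A and B be finite dimensional algebras over a field k with B self-injective, and let I be an injective right A-module. Then I ⊗_k B is an injective right (A ⊗_k B)-module. Moreover, if I is an injective hull of an A-module M, then I ⊗_k B is an injective hull of M ⊗_k B as an (A ⊗_k B)-module. -/
open CategoryTheory TensorProduct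

universe u

/-- The scalar multiplication of an explicitly given (possibly non-instance) module
structure. -/
def moduleSMul {R M : Type u} [Semiring R] [AddCommMonoid M] (inst : Module R M)
    (r : R) (m : M) : M :=
  @HSMul.hSMul R M M (@instHSMul R M inst.toDistribMulAction.toMulAction.toSMul) r m

section Stmt17Aux

variable (k : Type u) [Field k] (B : Type u) [Ring B] [Algebra k B]

/-! ### Twisted `B`-module structure on `B →ₗ[k] J` -/

/-- Twisted right-translation action of `B` on `B →ₗ[k] J`, as a ring hom to endomorphisms. -/
noncomputable def domEnd (J : Type u) [AddCommGroup J] [Module k J] :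
    B →+* Module.End k (B →ₗ[k] J) where
  toFun b :=
    { toFun := fun φ => φ.comp (LinearMap.mulRight k b)
      map_add' := fun φ ψ => by ext w; simp
      map_smul' := fun c φ => by ext w; simp }
  map_one' := by ext φ w; simp
  map_mul' b b' := by ext φ w; simp [mul_assoc]
  map_zero' := by ext φ w; simp
  map_add' b b' := by ext φ w; simp [mul_add]

/-- Twisted `B`-module structure on `B →ₗ[k] J`: `(b • φ) w = φ (w * b)`. -/
noncomputable def domModule (J : Type u) [AddCommGroup J] [Module k J] :
    Module B (B →ₗ[k] J) :=
  Module.compHom _ (domEnd k B J)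

variable {J : Type u} [AddCommGroup J] [Module k J]

lemma domModule_smul_apply (b : B) (φ : B →ₗ[k] J) (w : B) :
    moduleSMul (domModule k B J) b φ w = φ (w * b) := rfl

lemma domModule_tower :
    letI := domModule k B J; IsScalarTower k B (B →ₗ[k] J) := by
  letI := domModule k B J
  constructor
  intro c b φ
  ext w
  show φ (w * (c • b)) = c • φ (w * b)
  rw [mul_smul_comm, map_smul]

/-! ### Right-factor `B`-module structure on `M ⊗[k] W` -/

section RightMod

variable (W : Type u) [AddCommGroup W] [Module k W] [Module B W] [IsScalarTower k B W]
variable (M : Type u) [AddCommGroup M] [Module k M]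

/-- Action of `B` on the right factor of `M ⊗[k] W`, as a ring hom to endomorphisms. -/
noncomputable def rightEnd : B →+* Module.End k (M ⊗[k] W) where
  toFun b := LinearMap.lTensor M
    { toFun := fun w => b • w
      map_add' := fun _ _ => smul_add b _ _
      map_smul' := fun c w => smul_comm b c w }
  map_one' := by ext x w; simp
  map_mul' b b' := by ext x w; simp [mul_smul]
  map_zero' := by ext x w; simp
  map_add' b b' := by ext x w; simp [add_smul, tmul_add]

/-- The `B`-module structure on `M ⊗[k] W` acting on the right factor. -/
noncomputable def rightModule : Module B (M ⊗[k] W) :=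
  Module.compHom _ (rightEnd k B W M)

lemma rightModule_smul_tmul (b : B) (x : M) (w : W) :
    moduleSMul (rightModule k B W M) b (x ⊗ₜ[k] w) = x ⊗ₜ[k] (b • w) := rfl

lemma rightModule_tower :
    letI := rightModule k B W M; IsScalarTower k B (M ⊗[k] W) := by
  letI := rightModule k B W M
  constructor
  intro c b z
  induction z with
  | zero =>
      show rightEnd k B W M (c • b) 0 = c • rightEnd k B W M b 0
      rw [map_zero, map_zero]; exact (smul_zero c).symm
  | tmul x w =>
      show x ⊗ₜ[k] ((c • b) • w) = c • (x ⊗ₜ[k] (b • w))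
      rw [smul_assoc, tmul_smul]
  | add z₁ z₂ h₁ h₂ =>
      show rightEnd k B W M (c • b) (z₁ + z₂) = c • rightEnd k B W M b (z₁ + z₂)
      rw [map_add, map_add, smul_add]
      exact congrArg₂ (· + ·) h₁ h₂

variable (A : Type u) [Ring A] [Algebra k A]
variable (I : Type u) [AddCommGroup I] [Module k I] [Module A I] [IsScalarTower k A I]

lemma rightModule_smulCommClass :
    letI := rightModule k B W I; SMulCommClass A B (I ⊗[k] W) := by
  letI := rightModule k B W I
  constructor
  intro a b z
  induction z with
  | zero =>
      rw [smul_zero, smul_zero, smul_zero]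
  | tmul x w =>
      show a • (x ⊗ₜ[k] (b • w)) = rightEnd k B W I b (a • (x ⊗ₜ[k] w))
      rw [smul_tmul', smul_tmul']
      rfl
  | add z₁ z₂ h₁ h₂ =>
      rw [smul_add, smul_add, h₁, h₂, smul_add, smul_add]

/-- The `A ⊗[k] B`-module structure on `I ⊗[k] W`. -/
noncomputable def tensorModule' : Module (A ⊗[k] B) (I ⊗[k] W) :=
  letI := rightModule k B W I
  letI : IsScalarTower k B (I ⊗[k] W) := rightModule_tower k B W I
  letI : SMulCommClass A B (I ⊗[k] W) := rightModule_smulCommClass k B W A I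
  TensorProduct.Algebra.module

lemma tensorModule'_smul_tmul (a : A) (b : B) (x : I) (w : W) :
    moduleSMul (tensorModule' k B W A I) (a ⊗ₜ[k] b) (x ⊗ₜ[k] w) =
      (a • x) ⊗ₜ[k] (b • w) := by
  letI := rightModule k B W I
  show a • (moduleSMul (rightModule k B W I) b (x ⊗ₜ[k] w)) = _
  rw [rightModule_smul_tmul, smul_tmul']

end RightMod

/-- The canonical `A ⊗[k] B`-module structure on `I ⊗[k] B`. -/
noncomputable def tensorModule (A : Type u) [Ring A] [Algebra k A]
    (I : Type u) [AddCommGroup I] [Module k I] [Module A I] [IsScalarTower k A I] :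
    Module (A ⊗[k] B) (I ⊗[k] B) :=
  tensorModule' k B B A I

lemma tensorModule_smul_tmul (A : Type u) [Ring A] [Algebra k A]
    (I : Type u) [AddCommGroup I] [Module k I] [Module A I] [IsScalarTower k A I]
    (a : A) (b : B) (x : I) (y : B) :
    moduleSMul (tensorModule k B A I) (a ⊗ₜ[k] b) (x ⊗ₜ[k] y) = (a • x) ⊗ₜ[k] (b * y) :=
  tensorModule'_smul_tmul k B B A I a b x y

/-! ### The coinduced module `B →ₗ[k] I` and its injectivity -/

section Coind

variable (A : Type u) [Ring A] [Algebra k A]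
variable (I : Type u) [AddCommGroup I] [Module k I] [Module A I] [IsScalarTower k A I]

/-- The `A ⊗[k] B`-module structure on `B →ₗ[k] I`, `((a ⊗ b) • φ) w = a • φ (w * b)`. -/
noncomputable def coindModule : Module (A ⊗[k] B) (B →ₗ[k] I) :=
  letI := domModule k B I
  letI : IsScalarTower k B (B →ₗ[k] I) := domModule_tower k B
  letI : IsScalarTower k A (B →ₗ[k] I) := by
    constructor; intro c a φ; ext w
    show ((c • a) • φ) w = c • ((a • φ) w)
    rw [LinearMap.smul_apply, LinearMap.smul_apply, smul_assoc]
  letI : SMulCommClass A B (B →ₗ[k] I) := by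
    constructor; intro a b φ; ext w; rfl
  TensorProduct.Algebra.module

lemma coindModule_smul_apply (a : A) (b : B) (φ : B →ₗ[k] I) (w : B) :
    moduleSMul (coindModule k B A I) (a ⊗ₜ[k] b) φ w = a • φ (w * b) := rfl

lemma coindModule_injective (hI : Module.Injective A I) :
    @Module.Injective (A ⊗[k] B) _ (B →ₗ[k] I) _ (coindModule k B A I) := by
  letI := coindModule k B A I
  constructor
  intro X Y _ _ _ _ f hf g
  -- restrict scalars along `A → A ⊗[k] B`
  letI mAX : Module A X :=
    Module.compHom X (Algebra.TensorProduct.includeLeftRingHom (R := k) (A := A) (B := B))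
  letI mAY : Module A Y :=
    Module.compHom Y (Algebra.TensorProduct.includeLeftRingHom (R := k) (A := A) (B := B))
  have hsX : ∀ (a : A) (x : X), a • x = (a ⊗ₜ[k] (1 : B)) • x := fun _ _ => rfl
  have hsY : ∀ (a : A) (y : Y), a • y = (a ⊗ₜ[k] (1 : B)) • y := fun _ _ => rfl
  let f' : X →ₗ[A] Y :=
    { toFun := f
      map_add' := f.map_add
      map_smul' := fun a x => by
        simp only [RingHom.id_apply, hsX, hsY]; exact f.map_smul _ _ }
  let g₀ : X →ₗ[A] I :=
    { toFun := fun x => g x 1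
      map_add' := fun x x' => by show g (x + x') 1 = g x 1 + g x' 1; rw [map_add]; rfl
      map_smul' := fun a x => by
        simp only [RingHom.id_apply, hsX]
        rw [map_smul]
        show moduleSMul (coindModule k B A I) (a ⊗ₜ[k] (1 : B)) (g x) 1 = a • g x 1
        rw [coindModule_smul_apply, one_mul] }
  obtain ⟨h₀, hh₀⟩ := hI.out f' hf g₀
  -- the candidate extension
  have keyadd : ∀ (y y' : Y) (b : B), (1 : A) ⊗ₜ[k] b • (y + y')
      = ((1 : A) ⊗ₜ[k] b • y) + ((1 : A) ⊗ₜ[k] b • y') := fun y y' b => smul_add _ y y'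
  let H : Y → (B →ₗ[k] I) := fun y =>
    { toFun := fun b => h₀ (((1 : A) ⊗ₜ[k] b) • y)
      map_add' := fun b b' => by
        show h₀ (((1 : A) ⊗ₜ[k] (b + b')) • y) = h₀ (((1 : A) ⊗ₜ[k] b) • y) + h₀ (((1 : A) ⊗ₜ[k] b') • y)
        rw [show (1 : A) ⊗ₜ[k] (b + b') = (1 : A) ⊗ₜ[k] b + (1 : A) ⊗ₜ[k] b' from
          tmul_add _ _ _, add_smul, map_add]
      map_smul' := fun c b => by
        show h₀ (((1 : A) ⊗ₜ[k] (c • b)) • y) = c • h₀ (((1 : A) ⊗ₜ[k] b) • y)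
        rw [tmul_smul]
        have : ∀ z : A ⊗[k] B, ∀ y : Y, (c • z) • y = algebraMap k (A ⊗[k] B) c • z • y := by
          intro z y
          rw [Algebra.smul_def, mul_smul]
        rw [this]
        have halg : algebraMap k (A ⊗[k] B) c = (algebraMap k A c) ⊗ₜ[k] (1 : B) := rfl
        rw [halg, ← hsY, map_smul, algebraMap_smul] }
  have Hsmul : ∀ (s : A ⊗[k] B) (y : Y) (b : B),
      H (s • y) b = (fun w => h₀ ((((1:A) ⊗ₜ[k] b) * s) • y)) b := by
    intro s y b
    show h₀ ((((1:A) ⊗ₜ[k] b)) • s • y) = _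
    rw [← mul_smul]
  refine ⟨{ toFun := H
            map_add' := fun y y' => by
              ext b
              show h₀ (((1 : A) ⊗ₜ[k] b) • (y + y')) = _
              rw [smul_add, map_add]; rfl
            map_smul' := fun s y => by
              simp only [RingHom.id_apply]
              induction s using TensorProduct.induction_on with
              | zero =>
                  ext b
                  show h₀ (((1 : A) ⊗ₜ[k] b) • (0 : A ⊗[k] B) • y) = ((0:A⊗[k]B) • H y) b
                  rw [zero_smul, smul_zero, map_zero, zero_smul]
                  rfl
              | tmul a b' =>
                  ext b
                  show h₀ (((1 : A) ⊗ₜ[k] b) • (a ⊗ₜ[k] b') • y) = _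
                  rw [← mul_smul, Algebra.TensorProduct.tmul_mul_tmul, one_mul]
                  have : (a ⊗ₜ[k] (b * b')) • y = a • (((1:A) ⊗ₜ[k] (b * b')) • y) := by
                    rw [hsY (a := a), ← mul_smul, Algebra.TensorProduct.tmul_mul_tmul,
                      mul_one, one_mul]
                  rw [this, map_smul]
                  show a • H y (b * b') = ((a ⊗ₜ[k] b') • H y) b
                  rw [show ((a ⊗ₜ[k] b') • H y) b
                    = moduleSMul (coindModule k B A I) (a ⊗ₜ[k] b') (H y) b from rfl,
                    coindModule_smul_apply]
              | add s t hs ht =>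
                  ext b
                  have expand : (s + t) • y = s • y + t • y := add_smul s t y
                  show H ((s + t) • y) b = ((s + t) • H y) b
                  rw [expand, add_smul]
                  have : ∀ y₁ y₂ : Y, H (y₁ + y₂) b = H y₁ b + H y₂ b := by
                    intro y₁ y₂
                    show h₀ (((1 : A) ⊗ₜ[k] b) • (y₁ + y₂)) = _
                    rw [smul_add, map_add]; rfl
                  rw [this, hs, ht]
                  rfl },
        ?_⟩
  intro x
  ext b
  show h₀ (((1 : A) ⊗ₜ[k] b) • f x) = g x b
  rw [← f.map_smul]
  have hx := hh₀ (((1 : A) ⊗ₜ[k] b) • x)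
  rw [show f' (((1 : A) ⊗ₜ[k] b) • x) = f (((1 : A) ⊗ₜ[k] b) • x) from rfl] at hx
  rw [hx]
  show g (((1 : A) ⊗ₜ[k] b) • x) 1 = g x b
  rw [map_smul]
  show moduleSMul (coindModule k B A I) ((1:A) ⊗ₜ[k] b) (g x) 1 = g x b
  rw [coindModule_smul_apply, one_mul, one_smul]

end Coind

/-- A finite product of copies of an injective module is injective. -/
lemma pi_injective {R Q : Type u} [Ring R] [AddCommGroup Q] [Module R Q] (n : ℕ)
    (hQ : Module.Injective R Q) : Module.Injective R (Fin n → Q) := by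
  constructor
  intro X Y _ _ _ _ f hf g
  have h : ∀ i : Fin n, ∃ hi : Y →ₗ[R] Q, ∀ x, hi (f x) = (LinearMap.proj i).comp g x :=
    fun i => hQ.out f hf ((LinearMap.proj i).comp g)
  choose hs hhs using h
  exact ⟨LinearMap.pi hs, fun x => funext fun i => hhs i x⟩

section TensorInj

variable (A : Type u) [Ring A] [Algebra k A]
variable (I : Type u) [AddCommGroup I] [Module k I] [Module A I] [IsScalarTower k A I]
variable [FiniteDimensional k B]

set_option maxHeartbeats 1600000 in
lemma tensor_injective (hB : Module.Injective B B) (hI : Module.Injective A I) :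
    @Module.Injective (A ⊗[k] B) _ (I ⊗[k] B) _ (tensorModule k B A I) := by
  classical
  set n := Module.finrank k B with hn
  let bb : Module.Basis (Fin n) k B := Module.finBasis k B
  -- the twisted dual of B
  letI mD : Module B (B →ₗ[k] k) := domModule k B k
  letI : IsScalarTower k B (B →ₗ[k] k) := domModule_tower k B
  -- `W` is the twisted dual to the power `n`
  -- `F : B → W` is a `B`-linear embedding
  let F : B →ₗ[B] (Fin n → (B →ₗ[k] k)) :=
    { toFun := fun y i => (bb.coord i).comp (LinearMap.mulRight k y)
      map_add' := fun y y' => by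
        funext i; ext w
        show bb.coord i (w * (y + y')) = bb.coord i (w * y) + bb.coord i (w * y')
        rw [mul_add, map_add]
      map_smul' := fun b y => by
        funext i; ext w
        show bb.coord i (w * (b * y)) = bb.coord i ((w * b) * y)
        rw [mul_assoc] }
  have hFapp : ∀ (y : B) (i : Fin n) (w : B), F y i w = bb.coord i (w * y) := fun _ _ _ => rfl
  have hFinj : Function.Injective F := by
    intro y y' h
    have : ∀ i, bb.repr y i = bb.repr y' i := by
      intro i
      have h1 : F y i 1 = F y' i 1 := by rw [h]
      rw [hFapp, hFapp, one_mul, one_mul] at h1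
      simpa [Module.Basis.coord_apply] using h1
    apply bb.repr.injective
    exact Finsupp.ext this
  obtain ⟨r, hr⟩ := hB.out F hFinj (LinearMap.id : B →ₗ[B] B)
  -- the retraction, as a `k`-linear map
  have hrk : ∀ (c : k) (v : Fin n → (B →ₗ[k] k)), r (c • v) = c • r v := by
    intro c v
    rw [← algebraMap_smul B c v, map_smul, algebraMap_smul]
  let rK : (Fin n → (B →ₗ[k] k)) →ₗ[k] B :=
    { toFun := r, map_add' := r.map_add, map_smul' := hrk }
  -- the coinduced module and its powers
  letI mC : Module (A ⊗[k] B) (B →ₗ[k] I) := coindModule k B A I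
  have hCoindPi : Module.Injective (A ⊗[k] B) (Fin n → (B →ₗ[k] I)) :=
    pi_injective n (coindModule_injective k B A I hI)
  -- module structures on the tensor products
  letI mT : Module (A ⊗[k] B) (I ⊗[k] B) := tensorModule k B A I
  letI mTW : Module (A ⊗[k] B) (I ⊗[k] (Fin n → (B →ₗ[k] k))) :=
    tensorModule' k B (Fin n → (B →ₗ[k] k)) A I
  -- the comparison map δ
  let δ : (I ⊗[k] (Fin n → (B →ₗ[k] k))) →ₗ[k] (Fin n → (B →ₗ[k] I)) :=
    TensorProduct.lift (LinearMap.mk₂ k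
      (fun (x : I) (μ : Fin n → (B →ₗ[k] k)) => fun i => (μ i).smulRight x)
      (fun x x' μ => by funext i; ext w; show μ i w • (x + x') = μ i w • x + μ i w • x'
                        rw [smul_add])
      (fun c x μ => by funext i; ext w; show μ i w • (c • x) = c • (μ i w • x)
                       rw [smul_comm])
      (fun x μ μ' => by funext i; ext w
                        show (μ i w + μ' i w) • x = μ i w • x + μ' i w • x
                        rw [add_smul])
      (fun c x μ => by funext i; ext w
                       show (c • μ i w) • x = c • (μ i w • x)
                       rw [smul_assoc]))
  have hδt : ∀ (x : I) (μ : Fin n → (B →ₗ[k] k)) (i : Fin n) (w : B),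
      δ (x ⊗ₜ[k] μ) i w = μ i w • x := fun _ _ _ _ => rfl
  -- δ is equivariant
  have hδs : ∀ (s : A ⊗[k] B) (z : I ⊗[k] (Fin n → (B →ₗ[k] k))),
      δ (s • z) = s • δ z := by
    intro s z
    induction s using TensorProduct.induction_on with
    | zero => rw [zero_smul, zero_smul, map_zero]
    | tmul a b =>
        induction z with
        | zero => rw [smul_zero, map_zero, smul_zero]
        | tmul x μ =>
            rw [show (a ⊗ₜ[k] b) • (x ⊗ₜ[k] μ) = (a • x) ⊗ₜ[k] (b • μ) from
              tensorModule'_smul_tmul k B (Fin n → (B →ₗ[k] k)) A I a b x μ]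
            funext i; ext w
            rw [hδt]
            show (b • μ) i w • (a • x)
              = moduleSMul mC (a ⊗ₜ[k] b) (δ (x ⊗ₜ[k] μ) i) w
            rw [coindModule_smul_apply, hδt]
            show μ i (w * b) • (a • x) = a • (μ i (w * b) • x)
            rw [smul_comm]
        | add z₁ z₂ h₁ h₂ => rw [smul_add, map_add, h₁, h₂, map_add, smul_add]
    | add s t hs ht => rw [add_smul, map_add, hs, ht, add_smul]
  -- the inverse of δ
  let sngl : (i : Fin n) → (B →ₗ[k] k) →ₗ[k] (Fin n → (B →ₗ[k] k)) :=
    fun i => LinearMap.single k (fun _ => (B →ₗ[k] k)) i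
  let G : (Fin n → (B →ₗ[k] I)) →ₗ[k] (I ⊗[k] (Fin n → (B →ₗ[k] k))) :=
    { toFun := fun φ => ∑ i : Fin n, ∑ j : Fin n,
        (φ i (bb j)) ⊗ₜ[k] (sngl i (bb.coord j))
      map_add' := fun φ φ' => by
        rw [← Finset.sum_add_distrib]
        refine Finset.sum_congr rfl fun i _ => ?_
        rw [← Finset.sum_add_distrib]
        refine Finset.sum_congr rfl fun j _ => ?_
        show ((φ + φ') i) (bb j) ⊗ₜ[k] _ = _
        rw [Pi.add_apply, LinearMap.add_apply, add_tmul]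
      map_smul' := fun c φ => by
        simp only [RingHom.id_apply]
        rw [Finset.smul_sum]
        refine Finset.sum_congr rfl fun i _ => ?_
        rw [Finset.smul_sum]
        refine Finset.sum_congr rfl fun j _ => ?_
        show ((c • φ) i) (bb j) ⊗ₜ[k] _ = c • (φ i (bb j) ⊗ₜ[k] _)
        rw [Pi.smul_apply, LinearMap.smul_apply, smul_tmul'] }
  -- G ∘ δ = id
  have hGδ : ∀ z, G (δ z) = z := by
    intro z
    induction z with
    | zero => rw [map_zero, map_zero]
    | tmul x μ =>
        show ∑ i : Fin n, ∑ j : Fin n, (δ (x ⊗ₜ[k] μ) i (bb j)) ⊗ₜ[k] (sngl i (bb.coord j))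
          = x ⊗ₜ[k] μ
        have step1 : ∀ i : Fin n, ∑ j : Fin n, (δ (x ⊗ₜ[k] μ) i (bb j)) ⊗ₜ[k] (sngl i (bb.coord j))
            = x ⊗ₜ[k] (sngl i (μ i)) := by
          intro i
          have : ∀ j : Fin n, (δ (x ⊗ₜ[k] μ) i (bb j)) ⊗ₜ[k] (sngl i (bb.coord j))
              = x ⊗ₜ[k] (sngl i (μ i (bb j) • bb.coord j)) := by
            intro j
            rw [hδt, map_smul, smul_tmul]
          rw [Finset.sum_congr rfl fun j _ => this j, ← tmul_sum, ← map_sum]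
          congr 1
          congr 1
          ext w
          rw [show (∑ j : Fin n, μ i (bb j) • bb.coord j) w
            = ∑ j : Fin n, (μ i (bb j) • bb.coord j) w from
            by rw [LinearMap.coe_sum]; exact Finset.sum_apply w _ _]
          have : ∀ j : Fin n, (μ i (bb j) • bb.coord j) w = bb.repr w j • μ i (bb j) := by
            intro j
            show μ i (bb j) • (bb.coord j w) = bb.repr w j • μ i (bb j)
            rw [Module.Basis.coord_apply, smul_eq_mul, smul_eq_mul, mul_comm]
          rw [Finset.sum_congr rfl fun j _ => this j]
          calc ∑ j : Fin n, bb.repr w j • μ i (bb j)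
              = ∑ j : Fin n, μ i (bb.repr w j • bb j) := by
                refine Finset.sum_congr rfl fun j _ => ?_
                rw [map_smul]
            _ = μ i w := by rw [← map_sum, Module.Basis.sum_repr]
        rw [Finset.sum_congr rfl fun i _ => step1 i, ← tmul_sum]
        congr 1
        show ∑ i : Fin n, Pi.single i (μ i) = μ
        exact Finset.univ_sum_single μ
    | add z₁ z₂ h₁ h₂ => rw [map_add, map_add, h₁, h₂]
  -- δ ∘ G = id
  have hδG : ∀ φ, δ (G φ) = φ := by
    intro φ
    funext i
    ext w
    show δ (∑ i' : Fin n, ∑ j : Fin n, (φ i' (bb j)) ⊗ₜ[k] (sngl i' (bb.coord j))) i w = φ i w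
    rw [map_sum]
    rw [show (∑ i' : Fin n, δ (∑ j : Fin n, (φ i' (bb j)) ⊗ₜ[k] (sngl i' (bb.coord j)))) i
      = ∑ i' : Fin n, δ (∑ j : Fin n, (φ i' (bb j)) ⊗ₜ[k] (sngl i' (bb.coord j))) i from
      Finset.sum_apply i _ _]
    rw [show (∑ i' : Fin n, δ (∑ j : Fin n, (φ i' (bb j)) ⊗ₜ[k] (sngl i' (bb.coord j))) i) w
      = ∑ i' : Fin n, (δ (∑ j : Fin n, (φ i' (bb j)) ⊗ₜ[k] (sngl i' (bb.coord j))) i) w from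
      by rw [LinearMap.coe_sum]; exact Finset.sum_apply w _ _]
    have inner : ∀ i' : Fin n,
        (δ (∑ j : Fin n, (φ i' (bb j)) ⊗ₜ[k] (sngl i' (bb.coord j))) i) w
        = if i = i' then φ i' w else 0 := by
      intro i'
      rw [map_sum]
      rw [show (∑ j : Fin n, δ ((φ i' (bb j)) ⊗ₜ[k] (sngl i' (bb.coord j)))) i
        = ∑ j : Fin n, δ ((φ i' (bb j)) ⊗ₜ[k] (sngl i' (bb.coord j))) i from
        Finset.sum_apply i _ _]
      rw [show (∑ j : Fin n, δ ((φ i' (bb j)) ⊗ₜ[k] (sngl i' (bb.coord j))) i) w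
        = ∑ j : Fin n, (δ ((φ i' (bb j)) ⊗ₜ[k] (sngl i' (bb.coord j))) i) w from
        by rw [LinearMap.coe_sum]; exact Finset.sum_apply w _ _]
      have term : ∀ j : Fin n, (δ ((φ i' (bb j)) ⊗ₜ[k] (sngl i' (bb.coord j))) i) w
          = if i = i' then bb.repr w j • φ i' (bb j) else 0 := by
        intro j
        rw [hδt]
        show ((Pi.single (M := fun _ => B →ₗ[k] k) i' (bb.coord j)) i) w • φ i' (bb j) = _
        rw [Pi.single_apply]
        by_cases h : i = i'
        · rw [if_pos h, if_pos h, Module.Basis.coord_apply]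
        · rw [if_neg h, if_neg h, LinearMap.zero_apply, zero_smul]
      rw [Finset.sum_congr rfl fun j _ => term j]
      by_cases h : i = i'
      · simp only [if_pos h]
        calc ∑ j : Fin n, bb.repr w j • φ i' (bb j)
            = ∑ j : Fin n, φ i' (bb.repr w j • bb j) := by
              refine Finset.sum_congr rfl fun j _ => ?_
              rw [map_smul]
          _ = φ i' w := by rw [← map_sum, Module.Basis.sum_repr]
      · simp only [if_neg h, Finset.sum_const_zero]
    rw [Finset.sum_congr rfl fun i' _ => inner i', Finset.sum_ite_eq]
    rw [if_pos (Finset.mem_univ i)]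
  -- G is equivariant
  have hGs : ∀ (s : A ⊗[k] B) (φ : Fin n → (B →ₗ[k] I)), G (s • φ) = s • G φ := by
    intro s φ
    conv_lhs => rw [← hδG φ]
    rw [← hδs, hGδ]
  -- the retraction Ψ
  let Ψ : (Fin n → (B →ₗ[k] I)) →ₗ[k] (I ⊗[k] B) := (LinearMap.lTensor I rK).comp G
  have hlTs : ∀ (s : A ⊗[k] B) (z : I ⊗[k] (Fin n → (B →ₗ[k] k))),
      LinearMap.lTensor I rK (s • z) = s • LinearMap.lTensor I rK z := by
    intro s z
    induction s using TensorProduct.induction_on with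
    | zero => rw [zero_smul, zero_smul, map_zero]
    | tmul a b =>
        induction z with
        | zero => rw [smul_zero, map_zero, smul_zero]
        | tmul x μ =>
            rw [show (a ⊗ₜ[k] b) • (x ⊗ₜ[k] μ) = (a • x) ⊗ₜ[k] (b • μ) from
              tensorModule'_smul_tmul k B (Fin n → (B →ₗ[k] k)) A I a b x μ]
            rw [LinearMap.lTensor_tmul, LinearMap.lTensor_tmul]
            rw [show rK (b • μ) = b • r μ from r.map_smul b μ]
            rw [show (a ⊗ₜ[k] b) • ((x : I) ⊗ₜ[k] (rK μ : B)) = (a • x) ⊗ₜ[k] (b * rK μ) from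
              tensorModule_smul_tmul k B A I a b x (rK μ)]
            rfl
        | add z₁ z₂ h₁ h₂ => rw [smul_add, map_add, h₁, h₂, map_add, smul_add]
    | add s t hs ht => rw [add_smul, map_add, hs, ht, add_smul]
  have hΨs : ∀ (s : A ⊗[k] B) (φ : Fin n → (B →ₗ[k] I)), Ψ (s • φ) = s • Ψ φ := by
    intro s φ
    show LinearMap.lTensor I rK (G (s • φ)) = _
    rw [hGs, hlTs]
    rfl
  -- the map Φ
  let Fk : B →ₗ[k] (Fin n → (B →ₗ[k] k)) := F.restrictScalars k
  let Φ : (I ⊗[k] B) →ₗ[k] (Fin n → (B →ₗ[k] I)) := δ.comp (LinearMap.lTensor I Fk)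
  have hΦs : ∀ (s : A ⊗[k] B) (z : I ⊗[k] B), Φ (s • z) = s • Φ z := by
    intro s z
    have hlF : ∀ (s : A ⊗[k] B) (z : I ⊗[k] B),
        LinearMap.lTensor I Fk (s • z) = s • LinearMap.lTensor I Fk z := by
      intro s z
      induction s using TensorProduct.induction_on with
      | zero => rw [zero_smul, zero_smul, map_zero]
      | tmul a b =>
          induction z with
          | zero => rw [smul_zero, map_zero, smul_zero]
          | tmul x y =>
              rw [show (a ⊗ₜ[k] b) • ((x : I) ⊗ₜ[k] (y : B)) = (a • x) ⊗ₜ[k] (b * y) from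
                tensorModule_smul_tmul k B A I a b x y]
              rw [LinearMap.lTensor_tmul, LinearMap.lTensor_tmul]
              rw [show Fk (b * y) = b • F y from F.map_smul b y]
              rw [show (a ⊗ₜ[k] b) • ((x : I) ⊗ₜ[k] (Fk y)) = (a • x) ⊗ₜ[k] (b • Fk y) from
                tensorModule'_smul_tmul k B (Fin n → (B →ₗ[k] k)) A I a b x (Fk y)]
              rfl
          | add z₁ z₂ h₁ h₂ => rw [smul_add, map_add, h₁, h₂, map_add, smul_add]
      | add s t hs ht => rw [add_smul, map_add, hs, ht, add_smul]
    show δ (LinearMap.lTensor I Fk (s • z)) = _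
    rw [hlF, hδs]
    rfl
  -- Ψ ∘ Φ = id
  have hΨΦ : ∀ z : I ⊗[k] B, Ψ (Φ z) = z := by
    intro z
    induction z with
    | zero => rw [map_zero, map_zero]
    | tmul x y =>
        show Ψ (δ (LinearMap.lTensor I Fk (x ⊗ₜ[k] y))) = x ⊗ₜ[k] y
        rw [LinearMap.lTensor_tmul]
        show LinearMap.lTensor I rK (G (δ (x ⊗ₜ[k] Fk y))) = x ⊗ₜ[k] y
        rw [hGδ, LinearMap.lTensor_tmul]
        rw [show rK (Fk y) = y from hr y]
    | add z₁ z₂ h₁ h₂ => rw [map_add, map_add, h₁, h₂]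
  -- conclude
  constructor
  intro X Y _ _ _ _ f hf g
  let Φl : (I ⊗[k] B) →ₗ[A ⊗[k] B] (Fin n → (B →ₗ[k] I)) :=
    { toFun := Φ, map_add' := Φ.map_add, map_smul' := hΦs }
  obtain ⟨h, hh⟩ := hCoindPi.out f hf (Φl.comp g)
  let Ψl : (Fin n → (B →ₗ[k] I)) →ₗ[A ⊗[k] B] (I ⊗[k] B) :=
    { toFun := Ψ, map_add' := Ψ.map_add, map_smul' := hΨs }
  refine ⟨Ψl.comp h, fun x => ?_⟩
  show Ψ (h (f x)) = g x
  rw [hh]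
  show Ψ (Φ (g x)) = g x
  exact hΨΦ (g x)

end TensorInj

section Uniq

variable (A : Type u) [Ring A] [Algebra k A]
variable (I : Type u) [AddCommGroup I] [Module k I] [Module A I] [IsScalarTower k A I]

lemma module_eq_tensorModule (inst : Module (A ⊗[k] B) (I ⊗[k] B))
    (hsmul : ∀ (a : A) (b : B) (x : I) (y : B),
      moduleSMul inst (a ⊗ₜ[k] b) (x ⊗ₜ[k] y) = (a • x) ⊗ₜ[k] (b * y)) :
    inst = tensorModule k B A I := by
  have addl : ∀ (m : Module (A ⊗[k] B) (I ⊗[k] B)) (s t : A ⊗[k] B) (z : I ⊗[k] B),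
      moduleSMul m (s + t) z = moduleSMul m s z + moduleSMul m t z := by
    intro m s t z; letI := m; exact add_smul s t z
  have zerol : ∀ (m : Module (A ⊗[k] B) (I ⊗[k] B)) (z : I ⊗[k] B),
      moduleSMul m 0 z = 0 := by
    intro m z; letI := m; exact zero_smul _ z
  have smuladd : ∀ (m : Module (A ⊗[k] B) (I ⊗[k] B)) (s : A ⊗[k] B) (z z' : I ⊗[k] B),
      moduleSMul m s (z + z') = moduleSMul m s z + moduleSMul m s z' := by
    intro m s z z'; letI := m; exact smul_add s z z'
  have smulzero : ∀ (m : Module (A ⊗[k] B) (I ⊗[k] B)) (s : A ⊗[k] B),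
      moduleSMul m s 0 = 0 := by
    intro m s; letI := m; exact smul_zero s
  apply Module.ext'
  intro s z
  show moduleSMul inst s z = moduleSMul (tensorModule k B A I) s z
  induction s using TensorProduct.induction_on with
  | zero => rw [zerol, zerol]
  | tmul a b =>
      induction z with
      | zero => rw [smulzero, smulzero]
      | tmul x y => rw [hsmul, tensorModule_smul_tmul]
      | add z₁ z₂ h₁ h₂ => rw [smuladd, smuladd, h₁, h₂]
  | add s t hs ht => rw [addl, addl, hs, ht]

end Uniq

section Ess

variable (A : Type u) [Ring A] [Algebra k A]
variable (I : Type u) [AddCommGroup I] [Module k I] [Module A I] [IsScalarTower k A I]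
variable (M : Type u) [AddCommGroup M] [Module k M] [Module A M] [IsScalarTower k A M]
variable [FiniteDimensional k B]

set_option maxHeartbeats 1600000 in
lemma essential_tensor (f : M →ₗ[A] I)
    (hfess : ∀ N' : Submodule A I, N' ≠ ⊥ → N' ⊓ LinearMap.range f ≠ ⊥) :
    ∀ N : @Submodule (A ⊗[k] B) (I ⊗[k] B) _ _ (tensorModule k B A I),
      (∃ z ∈ N, z ≠ (0 : I ⊗[k] B)) →
      ∃ y ∈ N, y ≠ (0 : I ⊗[k] B) ∧
        y ∈ Set.range (LinearMap.rTensor B (f.restrictScalars k)) := by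
  classical
  letI mT : Module (A ⊗[k] B) (I ⊗[k] B) := tensorModule k B A I
  set n := Module.finrank k B with hn
  let bb : Module.Basis (Fin n) k B := Module.finBasis k B
  let e : (I ⊗[k] B) ≃ₗ[k] (Fin n →₀ I) :=
    (TensorProduct.congr (LinearEquiv.refl k I) bb.repr).trans
      (TensorProduct.finsuppScalarRight k k I (Fin n))
  have he_tmul : ∀ (x : I) (y : B) (j : Fin n), e (x ⊗ₜ[k] y) j = bb.repr y j • x := by
    intro x y j
    show TensorProduct.finsuppScalarRight k k I (Fin n)
      (TensorProduct.congr (LinearEquiv.refl k I) bb.repr (x ⊗ₜ[k] y)) j = _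
    rw [TensorProduct.congr_tmul]
    rw [TensorProduct.finsuppScalarRight_apply_tmul_apply]
    rfl
  have hsmul_coord : ∀ (a : A) (z : I ⊗[k] B) (j : Fin n),
      e ((a ⊗ₜ[k] (1 : B)) • z) j = a • e z j := by
    intro a z
    induction z with
    | zero =>
        intro j
        rw [smul_zero, map_zero]
        show (0 : Fin n →₀ I) j = a • (0 : Fin n →₀ I) j
        rw [Finsupp.coe_zero, Pi.zero_apply, smul_zero]
    | tmul x y =>
        intro j
        rw [show (a ⊗ₜ[k] (1 : B)) • (x ⊗ₜ[k] y) = (a • x) ⊗ₜ[k] ((1 : B) * y) from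
          tensorModule_smul_tmul k B A I a 1 x y, one_mul, he_tmul, he_tmul, smul_comm]
    | add z₁ z₂ h₁ h₂ =>
        intro j
        rw [smul_add, map_add, map_add]
        show (e ((a ⊗ₜ[k] 1) • z₁) + e ((a ⊗ₜ[k] 1) • z₂)) j = a • (e z₁ + e z₂) j
        rw [Finsupp.add_apply, Finsupp.add_apply, h₁ j, h₂ j, smul_add]
  have coords_zero : ∀ z : I ⊗[k] B, (∀ j, e z j = 0) → z = 0 := by
    intro z h
    have : e z = 0 := Finsupp.ext h
    exact (LinearEquiv.map_eq_zero_iff e).mp this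
  have he_single : ∀ (x : I) (j : Fin n), e (x ⊗ₜ[k] bb j) = Finsupp.single j x := by
    intro x j
    apply Finsupp.ext
    intro j'
    rw [he_tmul, Module.Basis.repr_self, Finsupp.single_apply, Finsupp.single_apply]
    by_cases h : j = j'
    · rw [if_pos h, if_pos h, one_smul]
    · rw [if_neg h, if_neg h, zero_smul]
  have hrange : ∀ z : I ⊗[k] B, (∀ j, e z j ∈ LinearMap.range f) →
      z ∈ Set.range (LinearMap.rTensor B (f.restrictScalars k)) := by
    intro z hz
    have : ∀ j : Fin n, ∃ m : M, f m = e z j := fun j => hz j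
    choose mm hmm using this
    refine ⟨∑ j : Fin n, mm j ⊗ₜ[k] bb j, ?_⟩
    rw [map_sum]
    have term : ∀ j : Fin n, LinearMap.rTensor B (f.restrictScalars k) (mm j ⊗ₜ[k] bb j)
        = (e z j) ⊗ₜ[k] bb j := by
      intro j
      rw [LinearMap.rTensor_tmul]
      rw [show (f.restrictScalars k) (mm j) = e z j from hmm j]
    rw [Finset.sum_congr rfl fun j _ => term j]
    apply e.injective
    rw [map_sum, Finset.sum_congr rfl fun j _ => he_single (e z j) j]
    exact Finsupp.univ_sum_single (e z)
  intro N hN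
  obtain ⟨z₀, hz₀N, hz₀⟩ := hN
  let bad : I ⊗[k] B → Finset (Fin n) :=
    fun z => Finset.univ.filter (fun j => e z j ∉ LinearMap.range f)
  have key : ∀ (c : ℕ) (z : I ⊗[k] B), z ∈ N → z ≠ 0 → (bad z).card ≤ c →
      ∃ y ∈ N, y ≠ (0 : I ⊗[k] B) ∧
        y ∈ Set.range (LinearMap.rTensor B (f.restrictScalars k)) := by
    intro c
    induction c with
    | zero =>
        intro z hzN hz hc
        refine ⟨z, hzN, hz, hrange z fun j => ?_⟩
        by_contra hj
        have : j ∈ bad z := Finset.mem_filter.mpr ⟨Finset.mem_univ j, hj⟩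
        have := Finset.card_pos.mpr ⟨j, this⟩
        omega
    | succ c ih =>
        intro z hzN hz hc
        by_cases hbad : bad z = ∅
        · refine ⟨z, hzN, hz, hrange z fun j => ?_⟩
          by_contra hj
          have : j ∈ bad z := Finset.mem_filter.mpr ⟨Finset.mem_univ j, hj⟩
          rw [hbad] at this
          exact absurd this (Finset.notMem_empty j)
        · obtain ⟨j, hj⟩ := Finset.nonempty_iff_ne_empty.mpr hbad
          have hjr : e z j ∉ LinearMap.range f := (Finset.mem_filter.mp hj).2
          have hxne : e z j ≠ 0 := by
            intro h0
            exact hjr (h0 ▸ (LinearMap.range f).zero_mem)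
          have hspan : Submodule.span A {e z j} ≠ ⊥ := by
            rw [Ne, Submodule.span_singleton_eq_bot]
            exact hxne
          obtain ⟨w, hw, hwne⟩ := (Submodule.ne_bot_iff _).mp (hfess _ hspan)
          obtain ⟨hw1, hw2⟩ := Submodule.mem_inf.mp hw
          obtain ⟨a, ha⟩ := Submodule.mem_span_singleton.mp hw1
          set z' := (a ⊗ₜ[k] (1 : B)) • z with hz'
          have hz'N : z' ∈ N := N.smul_mem _ hzN
          have hz'c : ∀ j' : Fin n, e z' j' = a • e z j' := fun j' => hsmul_coord a z j'
          have hz'j : e z' j = w := by rw [hz'c, ha]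
          have hz'ne : z' ≠ 0 := by
            intro h0
            apply hwne
            rw [← hz'j, h0, map_zero]
            rfl
          have hsubset : bad z' ⊆ (bad z).erase j := by
            intro j' hj'
            have hj'r : e z' j' ∉ LinearMap.range f := (Finset.mem_filter.mp hj').2
            refine Finset.mem_erase.mpr ⟨?_, ?_⟩
            · intro hjj
              exact hj'r (hjj ▸ (hz'j ▸ hw2))
            · refine Finset.mem_filter.mpr ⟨Finset.mem_univ j', ?_⟩
              intro hr
              obtain ⟨m₀, hm₀⟩ := hr
              exact hj'r ⟨a • m₀, by rw [map_smul, hm₀, ← hz'c]⟩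
          have hcard : (bad z').card ≤ c := by
            have h1 := Finset.card_le_card hsubset
            have h2 : ((bad z).erase j).card = (bad z).card - 1 :=
              Finset.card_erase_of_mem hj
            have h3 : 0 < (bad z).card := Finset.card_pos.mpr ⟨j, hj⟩
            omega
          exact ih z' hz'N hz'ne hcard
  exact key (bad z₀).card z₀ hz₀N hz₀ le_rfl

end Ess

end Stmt17Aux

/-- Let `A`, `B` be finite dimensional algebras over a field `k` with `B`
self-injective, and let `I` be an injective `A`-module. Then `I ⊗ₖ B`, with its natural
componentwise `A ⊗ₖ B`-module structure, is an injective `A ⊗ₖ B`-module. Moreover, if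
`f : M → I` is an injective hull, then the induced map `M ⊗ₖ B → I ⊗ₖ B` exhibits `I ⊗ₖ B`
as an injective hull of `M ⊗ₖ B`: it is an injective map, `I ⊗ₖ B` is injective, and its
image is essential (every `A ⊗ₖ B`-submodule containing a nonzero element meets the image
nontrivially). -/
theorem stmt17 (k : Type u) [Field k]
    (A B : Type u) [Ring A] [Ring B] [Algebra k A] [Algebra k B]
    [FiniteDimensional k A] [FiniteDimensional k B]
    (hB : Module.Injective B B)
    (I : Type u) [AddCommGroup I] [Module k I] [Module A I] [IsScalarTower k A I]
    (hI : Module.Injective A I)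
    (inst : Module (A ⊗[k] B) (I ⊗[k] B))
    (hsmul : ∀ (a : A) (b : B) (x : I) (y : B),
      moduleSMul inst (a ⊗ₜ[k] b) (x ⊗ₜ[k] y) = (a • x) ⊗ₜ[k] (b * y)) :
    @Module.Injective (A ⊗[k] B) _ (I ⊗[k] B) _ inst ∧
    ∀ (M : Type u) [AddCommGroup M] [Module k M] [Module A M] [IsScalarTower k A M]
      (f : M →ₗ[A] I), IsInjHull A f →
        Function.Injective (LinearMap.rTensor B (f.restrictScalars k)) ∧
        ∀ N : @Submodule (A ⊗[k] B) (I ⊗[k] B) _ _ inst,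
          (∃ z ∈ N, z ≠ (0 : I ⊗[k] B)) →
          ∃ y ∈ N, y ≠ (0 : I ⊗[k] B) ∧
            y ∈ Set.range (LinearMap.rTensor B (f.restrictScalars k)) := by
  have hEq : inst = tensorModule k B A I := module_eq_tensorModule k B A I inst hsmul
  subst hEq
  letI : Module (A ⊗[k] B) (I ⊗[k] B) := tensorModule k B A I
  refine ⟨tensor_injective k B A I hB hI, ?_⟩
  intro M _ _ _ _ f hf
  obtain ⟨-, hfinj, hess⟩ := hf
  refine ⟨?_, ?_⟩
  · exact Module.Flat.rTensor_preserves_injective_linearMap (f.restrictScalars k) hfinj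
  · exact essential_tensor k B A I M f hess
end
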